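/- Let φ : ℂ² \ {(0,0)} → ℝ be any function satisfying |z₁|² · |a|^(−2·φ(z₁,z₂)) + |z₂|² · |b|^(−2·φ(z₁,z₂)) = 1 for all (z₁, z₂) ≠ (0, 0), and define ψ̃(z₁, z₂) := ( φ(z₁,z₂) mod ℤ , z₁ · a^(−φ(z₁,z₂)) , z₂ · b^(−φ(z₁,z₂)) ) ∈ (ℝ/ℤ) × ℂ × ℂ. Then for all nonzero (z₁, z₂) and (w₁, w₂) in ℂ², one has ψ̃(z₁, z₂) = ψ̃(w₁, w₂) if and only if there exists an integer m with (w₁, w₂) = (aᵐ · z₁, bᵐ · z₂). In other words, the fibers of ψ̃ are exactly the orbits of the map γ : (z₁, z₂) ↦ (a·z₁, b·z₂). -/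

import Mathlib

lemma circ_iff (x y : ℝ) : (x : AddCircle (1:ℝ)) = y ↔ ∃ n : ℤ, y = x + n := by
  rw [QuotientAddGroup.eq_iff_sub_mem, AddSubgroup.mem_zmultiples_iff]
  constructor
  · rintro ⟨n, hn⟩; simp [zsmul_eq_mul] at hn; exact ⟨-n, by push_cast; linarith⟩
  · rintro ⟨n, hn⟩; exact ⟨-n, by simp [zsmul_eq_mul]; linarith⟩

lemma uniq (a b : ℂ) (ha : 1 < ‖a‖) (hb : 1 < ‖b‖)
    (z : ℂ × ℂ) (hz : z ≠ 0) {s t : ℝ}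
    (hs : ‖z.1‖ ^ 2 * ‖a‖ ^ (-(2 * s)) +
        ‖z.2‖ ^ 2 * ‖b‖ ^ (-(2 * s)) = 1)
    (ht : ‖z.1‖ ^ 2 * ‖a‖ ^ (-(2 * t)) +
        ‖z.2‖ ^ 2 * ‖b‖ ^ (-(2 * t)) = 1) : s = t := by
  have key : ∀ s t : ℝ, s < t →
      ‖z.1‖ ^ 2 * ‖a‖ ^ (-(2 * t)) +
        ‖z.2‖ ^ 2 * ‖b‖ ^ (-(2 * t)) <
      ‖z.1‖ ^ 2 * ‖a‖ ^ (-(2 * s)) +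
        ‖z.2‖ ^ 2 * ‖b‖ ^ (-(2 * s)) := by
    intro s t hst
    have hmono : ∀ c : ℝ, 1 < c → c ^ (-(2*t)) < c ^ (-(2*s)) := fun c hc =>
      Real.rpow_lt_rpow_left_iff hc |>.2 (by linarith)
    have h1 := hmono _ ha
    have h2 := hmono _ hb
    have hz1 : z.1 ≠ 0 ∨ z.2 ≠ 0 := by
      by_contra h; push_neg at h; exact hz (Prod.ext h.1 h.2)
    have hp1 : (0:ℝ) ≤ ‖z.1‖ ^ 2 := by positivity
    have hp2 : (0:ℝ) ≤ ‖z.2‖ ^ 2 := by positivity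
    rcases hz1 with h | h
    · have : (0:ℝ) < ‖z.1‖ ^ 2 := by
        have := norm_pos_iff.2 h; positivity
      nlinarith
    · have : (0:ℝ) < ‖z.2‖ ^ 2 := by
        have := norm_pos_iff.2 h; positivity
      nlinarith
  rcases lt_trichotomy s t with h | h | h
  · exact absurd (hs ▸ ht ▸ key s t h) (lt_irrefl 1)
  · exact h
  · exact absurd (hs ▸ ht ▸ key t s h) (lt_irrefl 1)

theorem stmt8 (a b : ℂ) (ha : 1 < ‖a‖) (hb : 1 < ‖b‖)
    (φ : ℂ × ℂ → ℝ)
    (hφ : ∀ z : ℂ × ℂ, z ≠ 0 →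
      ‖z.1‖ ^ 2 * ‖a‖ ^ (-(2 * φ z)) +
        ‖z.2‖ ^ 2 * ‖b‖ ^ (-(2 * φ z)) = 1)
    (z w : ℂ × ℂ) (hz : z ≠ 0) (hw : w ≠ 0) :
    (((φ z : AddCircle (1 : ℝ)), z.1 * a ^ (-(φ z : ℂ)), z.2 * b ^ (-(φ z : ℂ)))
      = ((φ w : AddCircle (1 : ℝ)), w.1 * a ^ (-(φ w : ℂ)), w.2 * b ^ (-(φ w : ℂ))))
      ↔ ∃ m : ℤ, w = (a ^ m * z.1, b ^ m * z.2) := by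
  have ha0 : a ≠ 0 := by
    intro h; rw [h] at ha; simp at ha; linarith
  have hb0 : b ≠ 0 := by
    intro h; rw [h] at hb; simp at hb; linarith
  constructor
  · rintro h
    rw [Prod.mk.injEq, Prod.mk.injEq] at h
    obtain ⟨h1, h2, h3⟩ := h
    obtain ⟨m, hm⟩ := (circ_iff _ _).1 h1
    refine ⟨m, ?_⟩
    have key : ∀ c : ℂ, c ≠ 0 → ∀ u v : ℂ, u * c ^ (-(φ z : ℂ)) = v * c ^ (-(φ w : ℂ)) →
        v = c ^ m * u := by
      intro c hc u v huv
      have hcz : c ^ (-(φ w : ℂ)) ≠ 0 := by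
        simp [Complex.cpow_eq_zero_iff, hc]
      have he : (-(φ z : ℝ) : ℂ) = (m : ℂ) + (-(φ w : ℝ) : ℂ) := by
        push_cast [hm]; ring
      rw [he, Complex.cpow_add _ _ hc, Complex.cpow_intCast] at huv
      have h4 : (c ^ m * u) * c ^ (-(φ w : ℝ) : ℂ) = v * c ^ (-(φ w : ℝ) : ℂ) := by
        rw [← huv]; ring
      exact (mul_right_cancel₀ hcz h4).symm
    exact Prod.ext (key a ha0 z.1 w.1 h2) (key b hb0 z.2 w.2 h3)
  · rintro ⟨m, hm⟩
    have habs : ∀ (c : ℂ), 1 < ‖c‖ → ∀ u : ℂ, ∀ t : ℝ,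
        ‖c ^ m * u‖ ^ 2 * ‖c‖ ^ (-(2 * (t + m))) =
        ‖u‖ ^ 2 * ‖c‖ ^ (-(2 * t)) := by
      intro c hc u t
      have hc0 : (0:ℝ) < ‖c‖ := by linarith
      rw [norm_mul, norm_zpow, mul_pow, ← zpow_natCast (‖c‖ ^ m) 2,
        ← zpow_mul, ← Real.rpow_intCast,
        mul_right_comm, ← Real.rpow_add hc0]
      rw [mul_comm]
      congr 1
      push_cast; ring
    have hw1 : w.1 = a ^ m * z.1 := by rw [hm]
    have hw2 : w.2 = b ^ m * z.2 := by rw [hm]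
    have h1 := hφ w hw
    rw [hw1, hw2] at h1
    have e : φ w = (φ w - m) + m := by ring
    rw [e] at h1
    rw [habs a ha z.1 _, habs b hb z.2 _] at h1
    have huq := uniq a b ha hb z hz h1 (hφ z hz)
    have hφw : φ w = φ z + m := by linarith
    simp only [Prod.mk.injEq]
    refine ⟨(circ_iff _ _).2 ⟨m, hφw⟩, ?_, ?_⟩
    · rw [hw1]
      have he : (-(φ z : ℝ) : ℂ) = (m : ℂ) + (-(φ w : ℝ) : ℂ) := by
        push_cast [hφw]; ring
      rw [he, Complex.cpow_add _ _ ha0, Complex.cpow_intCast]; ring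
    · rw [hw2]
      have he : (-(φ z : ℝ) : ℂ) = (m : ℂ) + (-(φ w : ℝ) : ℂ) := by
        push_cast [hφw]; ring
      rw [he, Complex.cpow_add _ _ hb0, Complex.cpow_intCast]; ring
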